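/- Let g: U ↪ T be a monomorphism of bi-pointed simplicial sets between necklaces (in particular, g preserves the first vertex α and the last vertex ω). Then the image under g of the last bead of U is contained in the last bead of T. -/

import Mathlib

open CategoryTheory Simplicial Opposite Limits

namespace Paper

/-- A simplex is degenerate if it is the image of a strictly lower-dimensional simplex
under a surjective simplicial operator. -/
def IsDegenerate (X : SSet) {n : ℕ} (x : X.obj (op (SimplexCategory.mk n))) : Prop :=
  ∃ (k : ℕ) (f : SimplexCategory.mk n ⟶ SimplexCategory.mk k)
    (y : X.obj (op (SimplexCategory.mk k))),
      k < n ∧ Function.Surjective f.toOrderHom ∧ X.map f.op y = x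

/-- The combinatorial data of a necklace `Δ[m₁] ∨ ⋯ ∨ Δ[mₜ]`. -/
structure Necklace where
  beads : List ℕ
  ne : beads ≠ []
  pos : 1 < beads.length → ∀ x ∈ beads, 0 < x

namespace Necklace

/-- The index of the last vertex of the necklace. -/
def total (N : Necklace) : ℕ := N.beads.sum

/-- The position of the `j`-th joint of the necklace. -/
def cum (N : Necklace) (j : ℕ) : ℕ := (N.beads.take j).sum

lemma cum_le_total (N : Necklace) (j : ℕ) : N.cum j ≤ N.total := by
  have := List.sum_take_add_sum_drop N.beads j
  unfold cum total
  omega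

lemma cum_succ_eq (N : Necklace) {j : ℕ} (hj : j < N.beads.length) :
    N.cum (j + 1) = N.cum j + N.beads.get ⟨j, hj⟩ :=
  List.sum_take_succ _ _ _

private lemma exists_interval : ∀ (l : List ℕ), l ≠ [] → ∀ k : ℕ, k ≤ l.sum →
    ∃ j, j < l.length ∧ (l.take j).sum ≤ k ∧ k ≤ (l.take (j + 1)).sum := by
  intro l
  induction l with
  | nil => intro h; exact absurd rfl h
  | cons a t ih =>
    intro _ k hk
    by_cases hka : k ≤ a
    · exact ⟨0, by simp, by simp, by simpa using hka⟩
    · push_neg at hka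
      rcases eq_or_ne t [] with rfl | ht
      · simp only [List.sum_cons, List.sum_nil, Nat.add_zero] at hk
        omega
      · simp only [List.sum_cons] at hk
        obtain ⟨j, hj, h1, h2⟩ := ih ht (k - a) (by omega)
        refine ⟨j + 1, by simp only [List.length_cons]; omega, ?_, ?_⟩
        · simp only [List.take_succ_cons, List.sum_cons]
          omega
        · simp only [List.take_succ_cons, List.sum_cons]
          omega

/-- The predicate: a simplex of `Δ[N.total]` lies in the `j`-th bead. -/
def InBead (N : Necklace) (j : ℕ) {x : SimplexCategory}
    (σ : x ⟶ SimplexCategory.mk N.total) : Prop :=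
  ∀ i, N.cum j ≤ (σ.toOrderHom i : ℕ) ∧ (σ.toOrderHom i : ℕ) ≤ N.cum (j + 1)

/-- The predicate defining the simplices of the necklace, as a subcomplex of
`Δ[N.total]`: those simplices contained in some bead. -/
def IsSimplex (N : Necklace) {x : SimplexCategory}
    (σ : x ⟶ SimplexCategory.mk N.total) : Prop :=
  ∃ j, j < N.beads.length ∧ N.InBead j σ

/-- The simplicial set `Δ[m₁] ∨ ⋯ ∨ Δ[mₜ]` associated to a necklace, realized as the
subcomplex of `Δ[N.total]` consisting of the simplices lying in one of the beads. -/
def toSSet (N : Necklace) : SSet where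
  obj X := { σ : X.unop ⟶ SimplexCategory.mk N.total // N.IsSimplex σ }
  map f := TypeCat.ofHom fun σ => ⟨f.unop ≫ σ.1, by
    obtain ⟨j, hj, hb⟩ := σ.2
    exact ⟨j, hj, fun i => hb _⟩⟩
  map_id X := by
    ext σ : 3
    exact Subtype.ext (Category.id_comp _)
  map_comp f g := by
    ext σ : 3
    exact Subtype.ext rfl

/-- The vertices of a necklace. -/
def vertex (N : Necklace) (k : Fin (N.total + 1)) :
    N.toSSet.obj (op (SimplexCategory.mk 0)) :=
  ⟨SimplexCategory.Hom.mk (OrderHom.const _ k), by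
    obtain ⟨j, hj, h1, h2⟩ := exists_interval N.beads N.ne k (Nat.lt_succ_iff.mp k.isLt)
    exact ⟨j, hj, fun _ => ⟨h1, h2⟩⟩⟩

/-- A simplex of a necklace lies in the last bead. -/
def InLastBead (N : Necklace) {x : SimplexCategoryᵒᵖ} (σ : N.toSSet.obj x) : Prop :=
  ∀ i, N.cum (N.beads.length - 1) ≤ (σ.1.toOrderHom i : ℕ)

/-- The `j`-th bead of a necklace, as a simplex of the necklace. -/
def beadSimplex (N : Necklace) (j : ℕ) (hj : j < N.beads.length) :
    N.toSSet.obj (op (SimplexCategory.mk (N.beads.get ⟨j, hj⟩))) :=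
  ⟨SimplexCategory.Hom.mk
    { toFun := fun i => ⟨N.cum j + i, by
        have h1 := N.cum_succ_eq hj
        have h2 := N.cum_le_total (j + 1)
        have h3 := i.isLt
        simp only [List.get_eq_getElem, SimplexCategory.len_mk] at h1 h3 ⊢
        omega⟩
      monotone' := fun i i' hii' => Nat.add_le_add_left hii' _ },
   ⟨j, hj, fun i => by
      refine ⟨Nat.le_add_right _ _, ?_⟩
      have h1 := N.cum_succ_eq hj
      have h3 := Nat.lt_succ_iff.mp i.isLt
      simp only [List.get_eq_getElem, SimplexCategory.len_mk] at h1 h3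
      show N.cum j + (i : ℕ) ≤ N.cum (j + 1)
      omega⟩⟩

lemma cum_mono (N : Necklace) : Monotone N.cum := by
  intro a b h
  unfold cum
  rw [show b = a + (b - a) from (Nat.add_sub_cancel' h).symm, List.take_add,
    List.sum_append]
  exact Nat.le_add_right _ _

lemma cum_length (N : Necklace) : N.cum N.beads.length = N.total := by
  unfold cum total
  rw [List.take_length]

private lemma exists_interval' : ∀ (l : List ℕ) (k : ℕ), k < l.sum →
    ∃ j, j < l.length ∧ (l.take j).sum ≤ k ∧ k < (l.take (j + 1)).sum := by
  intro l
  induction l with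
  | nil => intro k hk; simp at hk
  | cons a t ih =>
    intro k hk
    by_cases hka : k < a
    · exact ⟨0, by simp, by simp, by simpa using hka⟩
    · push_neg at hka
      simp only [List.sum_cons] at hk
      obtain ⟨j, hj, h1, h2⟩ := ih (k - a) (by omega)
      refine ⟨j + 1, by simp only [List.length_cons]; omega, ?_, ?_⟩
      · simp only [List.take_succ_cons, List.sum_cons]; omega
      · simp only [List.take_succ_cons, List.sum_cons]; omega

/-- A zero-simplex of a necklace is a vertex. -/
lemma zero_simplex_eq (N : Necklace) (τ : N.toSSet.obj (op (SimplexCategory.mk 0))) :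
    τ = N.vertex (τ.1.toOrderHom 0) := by
  apply Subtype.ext
  apply SimplexCategory.Hom.ext
  apply OrderHom.ext
  funext i
  have : i = 0 := by
    apply Fin.ext
    rw [Fin.val_zero]
    exact Nat.lt_one_iff.mp i.isLt
  rw [this]
  rfl

end Necklace

section

variable {U T : Necklace} (g : U.toSSet ⟶ T.toSSet)

/-- The map induced by `g` on vertices. -/
def vmap (k : Fin (U.total + 1)) : Fin (T.total + 1) :=
  (g.app (op (SimplexCategory.mk 0)) (U.vertex k)).1.toOrderHom 0

lemma g_vertex (k : Fin (U.total + 1)) :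
    g.app (op (SimplexCategory.mk 0)) (U.vertex k) = T.vertex (vmap g k) :=
  T.zero_simplex_eq _

/-- Naturality: the vertices of the image of a simplex are the images of its
vertices. -/
lemma map_vertex (x : SimplexCategoryᵒᵖ) (σ : U.toSSet.obj x)
    (i : Fin (x.unop.len + 1)) :
    (g.app x σ).1.toOrderHom i = vmap g (σ.1.toOrderHom i) := by
  let f : SimplexCategory.mk 0 ⟶ x.unop :=
    SimplexCategory.Hom.mk (OrderHom.const _ i)
  have hnat := ConcreteCategory.congr_hom (g.naturality f.op) σ
  have hU : U.toSSet.map f.op σ = U.vertex (σ.1.toOrderHom i) := by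
    apply Subtype.ext
    apply SimplexCategory.Hom.ext
    apply OrderHom.ext
    funext j
    rfl
  have := congrArg (fun τ => τ.1.toOrderHom 0) hnat
  simp only [types_comp_apply, ConcreteCategory.comp_apply] at this
  rw [hU, g_vertex] at this
  exact this.symm

/-- `vmap` sends consecutive vertices to vertices in weakly increasing order. -/
lemma vmap_step (k : ℕ) (hk : k + 1 ≤ U.total) :
    vmap g ⟨k, by omega⟩ ≤ vmap g ⟨k + 1, by omega⟩ := by
  obtain ⟨j, hj, h1, h2⟩ := Necklace.exists_interval' U.beads k hk
  let e : U.toSSet.obj (op (SimplexCategory.mk 1)) :=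
    ⟨SimplexCategory.Hom.mk
      { toFun := fun i => ⟨k + i, by
          have := Nat.lt_succ_iff.mp i.isLt
          simp only [SimplexCategory.len_mk] at this ⊢
          omega⟩
        monotone' := fun i i' hii' => Nat.add_le_add_left hii' _ },
     ⟨j, hj, fun i => by
        have h3 := Nat.lt_succ_iff.mp i.isLt
        simp only [SimplexCategory.len_mk] at h3
        exact ⟨Nat.le_trans h1 (Nat.le_add_right _ _), by
          show k + (i : ℕ) ≤ U.cum (j + 1)
          unfold Necklace.cum
          omega⟩⟩⟩
  have h0 := map_vertex g (op (SimplexCategory.mk 1)) e (0 : Fin 2)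
  have h1' := map_vertex g (op (SimplexCategory.mk 1)) e (1 : Fin 2)
  have he0 : e.1.toOrderHom (0 : Fin 2) =
      ⟨k, by simp only [SimplexCategory.len_mk]; omega⟩ := by
    apply Fin.ext; show k + 0 = k; omega
  have he1 : e.1.toOrderHom (1 : Fin 2) =
      ⟨k + 1, by simp only [SimplexCategory.len_mk]; omega⟩ := rfl
  rw [he0] at h0
  rw [he1] at h1'
  rw [← h0, ← h1']
  exact (g.app (op (SimplexCategory.mk 1)) e).1.toOrderHom.monotone
    (by decide : (0 : Fin 2) ≤ 1)

lemma vmap_mono : Monotone (vmap g) := by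
  have key : ∀ d k (h : k + d ≤ U.total),
      vmap g ⟨k, by omega⟩ ≤ vmap g ⟨k + d, by omega⟩ := by
    intro d
    induction d with
    | zero => intro k h; exact le_of_eq (congrArg _ (Fin.ext rfl))
    | succ d ih =>
      intro k h
      exact le_trans (ih k (by omega))
        (by
          have := vmap_step g (k + d) (by omega)
          exact le_of_le_of_eq this (congrArg _ (Fin.ext rfl)))
  intro a b hab
  have := key (b - a) a (by have := b.isLt; omega)
  have hb : (⟨(a : ℕ) + ((b : ℕ) - (a : ℕ)), by have := b.isLt; omega⟩ :
      Fin (U.total + 1)) = b := Fin.ext (by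
    simp only [Fin.val_mk]
    have : (a : ℕ) ≤ (b : ℕ) := hab
    omega)
  rw [hb] at this
  exact le_trans (le_of_eq (congrArg _ (Fin.ext rfl))) this

/-- The key lemma: the image of the last joint of `U` is at least the last joint
of `T`. -/
lemma vmap_last_joint
    (hω : g.app (op (SimplexCategory.mk 0)) (U.vertex (Fin.last _)) =
      T.vertex (Fin.last _)) :
    T.cum (T.beads.length - 1) ≤
      (vmap g ⟨U.cum (U.beads.length - 1), by
        have := U.cum_le_total (U.beads.length - 1); omega⟩ : ℕ) := by
  have hlenU : 0 < U.beads.length := List.length_pos_iff.mpr U.ne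
  have hlenT : 0 < T.beads.length := List.length_pos_iff.mpr T.ne
  have hjU : U.beads.length - 1 < U.beads.length := by omega
  have hvlast : vmap g (Fin.last U.total) = Fin.last T.total := by
    unfold vmap
    rw [hω]
    rfl
  have hcum : U.cum (U.beads.length - 1) +
      U.beads.get ⟨U.beads.length - 1, hjU⟩ = U.total := by
    have h1 := U.cum_succ_eq hjU
    have h2 : U.beads.length - 1 + 1 = U.beads.length := by omega
    rw [h2] at h1
    rw [← U.cum_length, h1]
  -- the image of the bead simplex lies in some bead of T
  obtain ⟨j, hj, hb⟩ := (g.app _ (U.beadSimplex (U.beads.length - 1) hjU)).2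
  -- first vertex of the bead simplex
  have hv0 : (g.app _ (U.beadSimplex (U.beads.length - 1) hjU)).1.toOrderHom
        ⟨0, Nat.succ_pos _⟩ =
      vmap g ⟨U.cum (U.beads.length - 1), by
        have := U.cum_le_total (U.beads.length - 1); omega⟩ := by
    rw [map_vertex]
    apply congrArg
    apply Fin.ext
    show U.cum (U.beads.length - 1) + 0 = U.cum (U.beads.length - 1)
    omega
  -- last vertex of the bead simplex
  have hvb : (g.app _ (U.beadSimplex (U.beads.length - 1) hjU)).1.toOrderHom
        ⟨U.beads.get ⟨U.beads.length - 1, hjU⟩, Nat.lt_succ_self _⟩ =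
      Fin.last T.total := by
    rw [map_vertex]
    have heq : ((U.beadSimplex (U.beads.length - 1) hjU).1.toOrderHom
        ⟨U.beads.get ⟨U.beads.length - 1, hjU⟩, Nat.lt_succ_self _⟩ :
        Fin (U.total + 1)) = Fin.last U.total := by
      apply Fin.ext
      exact hcum
    rw [heq, hvlast]
  -- from InBead: cum (j+1) = T.total
  have hb1 := hb ⟨U.beads.get ⟨U.beads.length - 1, hjU⟩, Nat.lt_succ_self _⟩
  rw [hvb] at hb1
  have htot : T.cum (j + 1) = T.total := by
    have hA := T.cum_le_total (j + 1)
    have hB : (Fin.last T.total : ℕ) = T.total := rfl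
    omega
  have hb0 := hb ⟨0, Nat.succ_pos _⟩
  rw [hv0] at hb0
  -- show j = T.beads.length - 1
  have hjeq : j = T.beads.length - 1 := by
    by_contra hne
    have hjlt : j + 1 < T.beads.length := by omega
    have h1 := T.cum_succ_eq hjlt
    have h2 := T.cum_le_total (j + 1 + 1)
    have hpos : 0 < T.beads.get ⟨j + 1, hjlt⟩ := by
      apply T.pos (by omega)
      exact List.get_mem _ _
    omega
  rw [← hjeq]
  exact hb0.1

end

/-- Let `g : U ↪ T` be a monomorphism of bi-pointed simplicial sets
between necklaces (in particular, `g` preserves the first vertex `α` and the last vertex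
`ω`). Then the image under `g` of the last bead of `U` is contained in the last bead of
`T`. -/
theorem statement_10 (U T : Necklace) (g : U.toSSet ⟶ T.toSSet) [Mono g]
    (hα : g.app (op (SimplexCategory.mk 0)) (U.vertex 0) = T.vertex 0)
    (hω : g.app (op (SimplexCategory.mk 0)) (U.vertex (Fin.last _)) =
      T.vertex (Fin.last _)) :
    ∀ (x : SimplexCategoryᵒᵖ) (σ : U.toSSet.obj x),
      U.InLastBead σ → T.InLastBead (g.app x σ) := by
  intro x σ hσ i
  rw [map_vertex]
  have h1 : (⟨U.cum (U.beads.length - 1), by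
      have := U.cum_le_total (U.beads.length - 1); omega⟩ : Fin (U.total + 1)) ≤
      σ.1.toOrderHom i := hσ i
  have h2 := vmap_mono g h1
  have h3 := vmap_last_joint g hω
  calc T.cum (T.beads.length - 1)
      ≤ (vmap g ⟨U.cum (U.beads.length - 1), _⟩ : ℕ) := h3
    _ ≤ (vmap g (σ.1.toOrderHom i) : ℕ) := h2

end Paper
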